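/- Let A, N, λ : ℝ → ℝ be 1-periodic functions with N twice continuously differentiable, A continuously differentiable and everywhere positive, λ continuous and everywhere positive, and suppose N''(x) = −A(x)^{−1}A'(x)N'(x) + A(x)²N(x)λ(x) − A(x)² for all x ∈ ℝ. Then there exists a point x₀ at which N attains its maximum, and N(x) ≤ N(x₀) ≤ λ(x₀)^{−1} for all x ∈ ℝ; in particular N(x) ≤ sup_y λ(y)^{−1} for all x. -/

import Mathlib

open Real

/-- Maximum-principle estimate for the lapse equation of a PMC foliation on the circle:
if `N'' = -A⁻¹ A' N' + A² N λ - A²` with `A > 0`, `λ > 0`, all data `1`-periodic, then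
`N` attains its maximum at some `x₀` and `N ≤ N x₀ ≤ (λ x₀)⁻¹ ≤ sup (λ ·)⁻¹`. -/
theorem lapse_maximum_principle
    (A N lam : ℝ → ℝ)
    (hAper : Function.Periodic A 1) (hNper : Function.Periodic N 1)
    (hlamper : Function.Periodic lam 1)
    (hN : ContDiff ℝ 2 N) (hA : ContDiff ℝ 1 A) (hApos : ∀ x, 0 < A x)
    (hlamcont : Continuous lam) (hlampos : ∀ x, 0 < lam x)
    (heq : ∀ x, deriv (deriv N) x =
      -(A x)⁻¹ * deriv A x * deriv N x + (A x) ^ 2 * N x * lam x - (A x) ^ 2) :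
    ∃ x₀ : ℝ, (∀ x, N x ≤ N x₀) ∧ N x₀ ≤ (lam x₀)⁻¹ ∧
      ∀ x, N x ≤ ⨆ y, (lam y)⁻¹ := by
  have hNc : Continuous N := hN.continuous
  -- maximum of N on [0,1]
  obtain ⟨x₀, -, hx₀⟩ := isCompact_Icc.exists_isMaxOn (Set.nonempty_Icc.mpr zero_le_one)
    hNc.continuousOn
  -- global maximum by periodicity
  have hmax : ∀ x, N x ≤ N x₀ := by
    intro x
    obtain ⟨y, hy, hxy⟩ := hNper.exists_mem_Ico₀ one_pos x
    rw [hxy]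
    exact hx₀ (Set.mem_Icc.mpr ⟨hy.1, hy.2.le⟩)
  -- differentiability
  have hdiffN : Differentiable ℝ N := hN.differentiable two_ne_zero
  have hdiffN' : Differentiable ℝ (deriv N) := by
    have h2 : ContDiff ℝ ((1 : WithTop ℕ∞) + 1) N := by exact_mod_cast hN
    rw [contDiff_succ_iff_deriv] at h2
    exact h2.2.2.differentiable one_ne_zero
  -- first derivative vanishes at the maximum
  have hlocmax : IsLocalMax N x₀ := Filter.Eventually.of_forall hmax
  have hN'0 : deriv N x₀ = 0 := hlocmax.deriv_eq_zero
  -- key estimate: N x₀ * lam x₀ ≤ 1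
  have hkey : N x₀ * lam x₀ ≤ 1 := by
    by_contra hcon
    push_neg at hcon
    -- second derivative at x₀ is positive
    have hc : 0 < deriv (deriv N) x₀ := by
      rw [heq x₀, hN'0]
      have hA2 : 0 < (A x₀) ^ 2 := pow_pos (hApos x₀) 2
      nlinarith [hA2]
    set g := deriv N with hg
    have hgd : HasDerivAt g (deriv (deriv N) x₀) x₀ :=
      (hdiffN' x₀).hasDerivAt
    rw [hasDerivAt_iff_tendsto_slope] at hgd
    have hgd' : Filter.Tendsto (slope g x₀) (nhdsWithin x₀ (Set.Ioi x₀))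
        (nhds (deriv (deriv N) x₀)) :=
      hgd.mono_left (nhdsWithin_mono _ (fun y hy => Set.mem_compl_singleton_iff.mpr
        (ne_of_gt hy)))
    have hev : ∀ᶠ x in nhdsWithin x₀ (Set.Ioi x₀), 0 < slope g x₀ x :=
      hgd'.eventually_const_lt hc
    obtain ⟨b, hb, hsub⟩ := mem_nhdsGT_iff_exists_Ioo_subset.mp hev
    -- deriv N positive on Ioo x₀ b
    have hgpos : ∀ x ∈ Set.Ioo x₀ b, 0 < deriv N x := by
      intro x hx
      have hs := hsub hx
      rw [Set.mem_setOf_eq, slope_def_field, hN'0, sub_zero] at hs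
      rcases div_pos_iff.mp hs with ⟨h1, _⟩ | ⟨_, h2⟩
      · exact h1
      · exact absurd (sub_pos.mpr hx.1) (not_lt.mpr h2.le)
    have hmono : StrictMonoOn N (Set.Icc x₀ b) :=
      strictMonoOn_of_deriv_pos (convex_Icc _ _) hNc.continuousOn
        (fun x hx => by rw [interior_Icc] at hx; exact hgpos x hx)
    have hblt : x₀ < b := Set.mem_Ioi.mp hb
    have hmid : x₀ < (x₀ + b) / 2 := by linarith
    have hmid2 : (x₀ + b) / 2 ≤ b := by linarith
    have := hmono (Set.mem_Icc.mpr ⟨le_rfl, hblt.le⟩)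
      (Set.mem_Icc.mpr ⟨hmid.le, hmid2⟩) hmid
    exact absurd (hmax ((x₀ + b) / 2)) (not_le.mpr this)
  have hle : N x₀ ≤ (lam x₀)⁻¹ := by
    rw [← one_div, le_div_iff₀ (hlampos x₀)]
    exact hkey
  -- boundedness of (lam ·)⁻¹
  obtain ⟨y₀, -, hy₀⟩ := isCompact_Icc.exists_isMinOn (Set.nonempty_Icc.mpr zero_le_one)
    hlamcont.continuousOn
  have hlmin : ∀ y, lam y₀ ≤ lam y := by
    intro y
    obtain ⟨z, hz, hyz⟩ := hlamper.exists_mem_Ico₀ one_pos y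
    rw [hyz]
    exact hy₀ (Set.mem_Icc.mpr ⟨hz.1, hz.2.le⟩)
  have hbdd : BddAbove (Set.range fun y => (lam y)⁻¹) := by
    refine ⟨(lam y₀)⁻¹, ?_⟩
    rintro z ⟨y, rfl⟩
    exact inv_anti₀ (hlampos y₀) (hlmin y)
  refine ⟨x₀, hmax, hle, fun x => ?_⟩
  calc N x ≤ N x₀ := hmax x
    _ ≤ (lam x₀)⁻¹ := hle
    _ ≤ ⨆ y, (lam y)⁻¹ := le_ciSup hbdd x₀
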